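/- Under the hypotheses of the local energy balance for the Kirchhoff limit system — μ > 0, a > 0, P = diag(1,1,2/a); continuously differentiable fields r̆, v, ω, n, κ : [0,1] × ℝ → ℝ³ (with continuous partial derivatives on [0,1] × ℝ); τ̊ : [0,1] → ℝ³; orthogonal-matrix-valued D; V : ℝ³ → ℝ continuously differentiable; satisfying D·∂_t r̆ = v, 0 = ∂_s v + κ×v + τ̊×ω, ∂_tκ = ∂_sω + κ×ω, ∂_t v = ∂_s n + κ×n + v×ω + D·(−∇V(r̆)), 0 = ∂_s m + κ×m + τ̊×n with m = μ⁻²P·κ — assume in addition the cantilever boundary conditions v(0,t) = 0, ω(0,t) = 0, n(1,t) = 0 and κ(1,t) = 0 for all t. Then the total energy E(t) := ∫₀¹ [½‖v(s,t)‖² + (2μ²)⁻¹ κ(s,t)·(P·κ(s,t)) + V(r̆(s,t))] ds is constant in t. -/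

import Mathlib

open Matrix

noncomputable section

/-- Cross product on `ℝ³`. -/
def cross3 (a b : Fin 3 → ℝ) : Fin 3 → ℝ :=
  ![a 1 * b 2 - a 2 * b 1, a 2 * b 0 - a 0 * b 2, a 0 * b 1 - a 1 * b 0]

/-- Partial derivative with respect to the time variable `t` (second component). -/
def pt {E : Type*} [NormedAddCommGroup E] [NormedSpace ℝ E]
    (f : ℝ × ℝ → E) (p : ℝ × ℝ) : E :=
  deriv (fun t => f (p.1, t)) p.2

/-- Partial derivative with respect to the space variable `s` (first component). -/
def ps {E : Type*} [NormedAddCommGroup E] [NormedSpace ℝ E]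
    (f : ℝ × ℝ → E) (p : ℝ × ℝ) : E :=
  deriv (fun s => f (s, p.2)) p.1

/-- Coordinate gradient of a scalar function on `ℝ³`. -/
def grad3 (V : (Fin 3 → ℝ) → ℝ) (x : Fin 3 → ℝ) : Fin 3 → ℝ :=
  fun i => fderiv ℝ V x (Pi.single i 1)

section KHelpers

open MeasureTheory

variable {E : Type*} [NormedAddCommGroup E] [NormedSpace ℝ E]

lemma K_hasDerivAt_snd_slice {f : ℝ × ℝ → E} (hf : ContDiff ℝ 1 f) (p : ℝ × ℝ) :
    HasDerivAt (fun t => f (p.1, t)) (fderiv ℝ f p ((0 : ℝ), (1 : ℝ))) p.2 := by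
  have h1 : HasDerivAt (fun t : ℝ => ((p.1, t) : ℝ × ℝ)) ((0 : ℝ), (1 : ℝ)) p.2 :=
    (hasDerivAt_const _ _).prodMk (hasDerivAt_id _)
  exact (hf.differentiable one_ne_zero p).hasFDerivAt.comp_hasDerivAt p.2 h1

lemma K_hasDerivAt_fst_slice {f : ℝ × ℝ → E} (hf : ContDiff ℝ 1 f) (p : ℝ × ℝ) :
    HasDerivAt (fun s => f (s, p.2)) (fderiv ℝ f p ((1 : ℝ), (0 : ℝ))) p.1 := by
  have h1 : HasDerivAt (fun s : ℝ => ((s, p.2) : ℝ × ℝ)) ((1 : ℝ), (0 : ℝ)) p.1 :=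
    (hasDerivAt_id _).prodMk (hasDerivAt_const _ _)
  exact (hf.differentiable one_ne_zero p).hasFDerivAt.comp_hasDerivAt p.1 h1

lemma K_pt_eq {f : ℝ × ℝ → E} (hf : ContDiff ℝ 1 f) (p : ℝ × ℝ) :
    pt f p = fderiv ℝ f p ((0 : ℝ), (1 : ℝ)) := (K_hasDerivAt_snd_slice hf p).deriv

lemma K_ps_eq {f : ℝ × ℝ → E} (hf : ContDiff ℝ 1 f) (p : ℝ × ℝ) :
    ps f p = fderiv ℝ f p ((1 : ℝ), (0 : ℝ)) := (K_hasDerivAt_fst_slice hf p).deriv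

lemma K_hasDerivAt_pt {f : ℝ × ℝ → E} (hf : ContDiff ℝ 1 f) (p : ℝ × ℝ) :
    HasDerivAt (fun t => f (p.1, t)) (pt f p) p.2 := by
  rw [K_pt_eq hf]; exact K_hasDerivAt_snd_slice hf p

lemma K_hasDerivAt_ps {f : ℝ × ℝ → E} (hf : ContDiff ℝ 1 f) (p : ℝ × ℝ) :
    HasDerivAt (fun s => f (s, p.2)) (ps f p) p.1 := by
  rw [K_ps_eq hf]; exact K_hasDerivAt_fst_slice hf p

lemma K_continuous_pt {f : ℝ × ℝ → E} (hf : ContDiff ℝ 1 f) : Continuous (pt f) := by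
  have h : pt f = fun p => fderiv ℝ f p ((0 : ℝ), (1 : ℝ)) := funext fun p => K_pt_eq hf p
  rw [h]
  exact (hf.continuous_fderiv one_ne_zero).clm_apply continuous_const

lemma K_continuous_ps {f : ℝ × ℝ → E} (hf : ContDiff ℝ 1 f) : Continuous (ps f) := by
  have h : ps f = fun p => fderiv ℝ f p ((1 : ℝ), (0 : ℝ)) := funext fun p => K_ps_eq hf p
  rw [h]
  exact (hf.continuous_fderiv one_ne_zero).clm_apply continuous_const

lemma K_Continuous.dot3 {X : Type*} [TopologicalSpace X] {f g : X → Fin 3 → ℝ}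
    (hf : Continuous f) (hg : Continuous g) : Continuous fun x => f x ⬝ᵥ g x := by
  simp only [dotProduct]
  exact continuous_finset_sum _ fun i _ =>
    ((continuous_apply i).comp hf).mul ((continuous_apply i).comp hg)

lemma K_HasDerivAt.dot3 {f g : ℝ → Fin 3 → ℝ} {f' g' : Fin 3 → ℝ} {x : ℝ}
    (hf : HasDerivAt f f' x) (hg : HasDerivAt g g' x) :
    HasDerivAt (fun t => f t ⬝ᵥ g t) (f' ⬝ᵥ g x + f x ⬝ᵥ g') x := by
  have hfi : ∀ i : Fin 3, HasDerivAt (fun t => f t i) (f' i) x := fun i => by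
    simpa [Function.comp_def] using (ContinuousLinearMap.proj (R := ℝ) (φ := fun _ : Fin 3 => ℝ)
      i).hasFDerivAt.comp_hasDerivAt x hf
  have hgi : ∀ i : Fin 3, HasDerivAt (fun t => g t i) (g' i) x := fun i => by
    simpa [Function.comp_def] using (ContinuousLinearMap.proj (R := ℝ) (φ := fun _ : Fin 3 => ℝ)
      i).hasFDerivAt.comp_hasDerivAt x hg
  have h := HasDerivAt.fun_sum (u := Finset.univ) (fun i _ => (hfi i).mul (hgi i))
  simpa [dotProduct, Finset.sum_add_distrib] using h

lemma K_HasDerivAt.mulVec3 {f : ℝ → Fin 3 → ℝ} {f' : Fin 3 → ℝ} {x : ℝ}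
    (P : Matrix (Fin 3) (Fin 3) ℝ) (hf : HasDerivAt f f' x) :
    HasDerivAt (fun t => P.mulVec (f t)) (P.mulVec f') x := by
  have h := (LinearMap.toContinuousLinearMap P.mulVecLin).hasFDerivAt.comp_hasDerivAt x hf
  simpa [Function.comp_def] using h

lemma K_clm_apply_eq_grad_dot (L : (Fin 3 → ℝ) →L[ℝ] ℝ) (y : Fin 3 → ℝ) :
    L y = (fun i => L (Pi.single i 1)) ⬝ᵥ y := by
  have hy : y = ∑ i : Fin 3, y i • (Pi.single i (1 : ℝ) : Fin 3 → ℝ) := by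
    funext j
    simp [Pi.single_apply]
  conv_lhs => rw [hy]
  rw [map_sum]
  simp [dotProduct, mul_comm]

lemma K_alg (μ a F : ℝ)
    (K Vv O N T pn pω Dm : Fin 3 → ℝ)
    (hDm : Vv ⬝ᵥ Dm = -F) :
    1 / 2 * ((pn + cross3 K N + cross3 Vv O + Dm) ⬝ᵥ Vv
        + Vv ⬝ᵥ (pn + cross3 K N + cross3 Vv O + Dm))
      + (2 * μ ^ 2)⁻¹ * ((pω + cross3 K O) ⬝ᵥ (Matrix.diagonal ![1, 1, 2 / a]).mulVec K
        + K ⬝ᵥ (Matrix.diagonal ![1, 1, 2 / a]).mulVec (pω + cross3 K O)) + F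
    = ((-cross3 K Vv - cross3 T O) ⬝ᵥ N + Vv ⬝ᵥ pn)
      + (pω ⬝ᵥ ((μ ^ 2)⁻¹ • (Matrix.diagonal ![1, 1, 2 / a]).mulVec K)
        + O ⬝ᵥ (-cross3 K ((μ ^ 2)⁻¹ • (Matrix.diagonal ![1, 1, 2 / a]).mulVec K)
          - cross3 T N)) := by
  simp only [dotProduct, Fin.sum_univ_three, cross3, Matrix.mulVec_diagonal,
    Pi.add_apply, Pi.sub_apply, Pi.neg_apply, Pi.smul_apply, smul_eq_mul,
    Matrix.cons_val_zero, Matrix.cons_val_one, Matrix.head_cons,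
    Matrix.cons_val_two, Matrix.tail_cons] at hDm ⊢
  linear_combination hDm

end KHelpers

open MeasureTheory in
/-- energy conservation of the Kirchhoff limit system for a cantilever
beam: under the limit system on `[0,1] × ℝ` with boundary conditions `v(0,t) = 0`,
`ω(0,t) = 0`, `n(1,t) = 0`, `κ(1,t) = 0`, the total energy
`E(t) = ∫₀¹ [½‖v‖² + (2μ²)⁻¹κ·(P·κ) + V(r̆)] ds` is constant in `t`. -/
theorem kirchhoff_energy_conservation_cantilever
    (μ a : ℝ) (hμ : 0 < μ) (ha : 0 < a)
    (r v ω n κ : ℝ × ℝ → Fin 3 → ℝ)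
    (hr : ContDiff ℝ 1 r) (hv : ContDiff ℝ 1 v) (hω : ContDiff ℝ 1 ω)
    (hn : ContDiff ℝ 1 n) (hκ : ContDiff ℝ 1 κ)
    (τ0 : ℝ → Fin 3 → ℝ)
    (D : ℝ × ℝ → Matrix (Fin 3) (Fin 3) ℝ)
    (hD : ∀ p : ℝ × ℝ, D p * (D p)ᵀ = 1)
    (V : (Fin 3 → ℝ) → ℝ) (hV : ContDiff ℝ 1 V)
    (hkin : ∀ p : ℝ × ℝ, p.1 ∈ Set.Icc (0:ℝ) 1 → (D p).mulVec (pt r p) = v p)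
    (hconstr : ∀ p : ℝ × ℝ, p.1 ∈ Set.Icc (0:ℝ) 1 →
      (0 : Fin 3 → ℝ) = ps v p + cross3 (κ p) (v p) + cross3 (τ0 p.1) (ω p))
    (hcompat : ∀ p : ℝ × ℝ, p.1 ∈ Set.Icc (0:ℝ) 1 →
      pt κ p = ps ω p + cross3 (κ p) (ω p))
    (hlin : ∀ p : ℝ × ℝ, p.1 ∈ Set.Icc (0:ℝ) 1 →
      pt v p = ps n p + cross3 (κ p) (n p) + cross3 (v p) (ω p)
        + (D p).mulVec (-(grad3 V (r p))))
    (hang : ∀ p : ℝ × ℝ, p.1 ∈ Set.Icc (0:ℝ) 1 →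
      (0 : Fin 3 → ℝ)
        = ps (fun q => (μ ^ 2)⁻¹ • (Matrix.diagonal ![1, 1, 2 / a]).mulVec (κ q)) p
          + cross3 (κ p) ((μ ^ 2)⁻¹ • (Matrix.diagonal ![1, 1, 2 / a]).mulVec (κ p))
          + cross3 (τ0 p.1) (n p))
    (hbc : ∀ t : ℝ, v (0, t) = 0 ∧ ω (0, t) = 0 ∧ n (1, t) = 0 ∧ κ (1, t) = 0) :
    ∀ t₁ t₂ : ℝ,
      (∫ s in (0:ℝ)..1, ((1 / 2) * (v (s, t₁) ⬝ᵥ v (s, t₁))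
          + (2 * μ ^ 2)⁻¹ * (κ (s, t₁) ⬝ᵥ (Matrix.diagonal ![1, 1, 2 / a]).mulVec (κ (s, t₁)))
          + V (r (s, t₁))))
        = ∫ s in (0:ℝ)..1, ((1 / 2) * (v (s, t₂) ⬝ᵥ v (s, t₂))
          + (2 * μ ^ 2)⁻¹ * (κ (s, t₂) ⬝ᵥ (Matrix.diagonal ![1, 1, 2 / a]).mulVec (κ (s, t₂)))
          + V (r (s, t₂))) := by
  intro t₁ t₂
  set P : Matrix (Fin 3) (Fin 3) ℝ := Matrix.diagonal ![1, 1, 2 / a] with hP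
  set m : ℝ × ℝ → Fin 3 → ℝ := fun q => (μ ^ 2)⁻¹ • P.mulVec (κ q) with hm
  have hmC1 : ContDiff ℝ 1 m := by
    rw [hm]
    exact (((LinearMap.toContinuousLinearMap P.mulVecLin).contDiff.comp hκ).const_smul
      ((μ ^ 2)⁻¹ : ℝ))
  set W : ℝ × ℝ → ℝ := fun p =>
    1 / 2 * (v p ⬝ᵥ v p) + (2 * μ ^ 2)⁻¹ * (κ p ⬝ᵥ P.mulVec (κ p)) + V (r p) with hW
  set Wt : ℝ × ℝ → ℝ := fun p =>
    1 / 2 * (pt v p ⬝ᵥ v p + v p ⬝ᵥ pt v p)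
      + (2 * μ ^ 2)⁻¹ * (pt κ p ⬝ᵥ P.mulVec (κ p) + κ p ⬝ᵥ P.mulVec (pt κ p))
      + fderiv ℝ V (r p) (pt r p) with hWt
  set G : ℝ × ℝ → ℝ := fun p => v p ⬝ᵥ n p + ω p ⬝ᵥ m p with hG
  set C : ℝ × ℝ → ℝ := fun p =>
    (ps v p ⬝ᵥ n p + v p ⬝ᵥ ps n p) + (ps ω p ⬝ᵥ m p + ω p ⬝ᵥ ps m p) with hC
  -- derivative in time of the energy density
  have hWd : ∀ p : ℝ × ℝ, HasDerivAt (fun t => W (p.1, t)) (Wt p) p.2 := by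
    intro p
    have hvt := K_hasDerivAt_pt hv p
    have hκt := K_hasDerivAt_pt hκ p
    have hrt := K_hasDerivAt_pt hr p
    have h1 := K_HasDerivAt.dot3 hvt hvt
    have h2 := K_HasDerivAt.dot3 hκt (K_HasDerivAt.mulVec3 P hκt)
    have h3 := (hV.differentiable one_ne_zero (r p)).hasFDerivAt.comp_hasDerivAt p.2 hrt
    simp only [hW, hWt]
    exact ((h1.const_mul (1 / 2 : ℝ)).add (h2.const_mul ((2 * μ ^ 2)⁻¹ : ℝ))).add h3
  -- derivative in space of the flux
  have hGd : ∀ p : ℝ × ℝ, HasDerivAt (fun s => G (s, p.2)) (C p) p.1 := by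
    intro p
    have h1 := K_HasDerivAt.dot3 (K_hasDerivAt_ps hv p) (K_hasDerivAt_ps hn p)
    have h2 := K_HasDerivAt.dot3 (K_hasDerivAt_ps hω p) (K_hasDerivAt_ps hmC1 p)
    simp only [hG, hC]
    exact h1.add h2
  -- continuity facts
  have hCc : Continuous C := by
    rw [hC]
    exact ((K_Continuous.dot3 (K_continuous_ps hv) hn.continuous).add
        (K_Continuous.dot3 hv.continuous (K_continuous_ps hn))).add
      ((K_Continuous.dot3 (K_continuous_ps hω) hmC1.continuous).add
        (K_Continuous.dot3 hω.continuous (K_continuous_ps hmC1)))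
  have hWc : Continuous W := by
    rw [hW]
    have hPκ : Continuous fun p : ℝ × ℝ => P.mulVec (κ p) :=
      (LinearMap.toContinuousLinearMap P.mulVecLin).continuous.comp hκ.continuous
    exact (((continuous_const.mul (K_Continuous.dot3 hv.continuous hv.continuous))).add
      ((continuous_const.mul (K_Continuous.dot3 hκ.continuous hPκ)))).add
        (hV.continuous.comp hr.continuous)
  have hWtc : Continuous Wt := by
    rw [hWt]
    have hPκ : Continuous fun p : ℝ × ℝ => P.mulVec (κ p) :=
      (LinearMap.toContinuousLinearMap P.mulVecLin).continuous.comp hκ.continuous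
    have hPκt : Continuous fun p : ℝ × ℝ => P.mulVec (pt κ p) :=
      (LinearMap.toContinuousLinearMap P.mulVecLin).continuous.comp (K_continuous_pt hκ)
    have hfd : Continuous fun p : ℝ × ℝ => fderiv ℝ V (r p) (pt r p) :=
      ((hV.continuous_fderiv one_ne_zero).comp hr.continuous).clm_apply (K_continuous_pt hr)
    exact ((continuous_const.mul ((K_Continuous.dot3 (K_continuous_pt hv) hv.continuous).add
        (K_Continuous.dot3 hv.continuous (K_continuous_pt hv)))).add
      (continuous_const.mul ((K_Continuous.dot3 (K_continuous_pt hκ) hPκ).add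
        (K_Continuous.dot3 hκ.continuous hPκt)))).add hfd
  -- the potential-force term
  have hgrad : ∀ x y : Fin 3 → ℝ, fderiv ℝ V x y = grad3 V x ⬝ᵥ y := fun x y =>
    K_clm_apply_eq_grad_dot (fderiv ℝ V x) y
  have hDterm : ∀ p : ℝ × ℝ, p.1 ∈ Set.Icc (0:ℝ) 1 →
      v p ⬝ᵥ (D p).mulVec (-(grad3 V (r p))) = -(fderiv ℝ V (r p) (pt r p)) := by
    intro p hp
    rw [← hkin p hp]
    have hDD : (D p)ᵀ * D p = 1 := mul_eq_one_comm.mp (hD p)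
    rw [Matrix.dotProduct_mulVec, ← Matrix.mulVec_transpose, Matrix.mulVec_mulVec, hDD,
      Matrix.one_mulVec, hgrad (r p) (pt r p), dotProduct_neg, dotProduct_comm]
  -- the local energy balance : ∂ₜ W = ∂ₛ (v·n + ω·m)
  have key : ∀ p : ℝ × ℝ, p.1 ∈ Set.Icc (0:ℝ) 1 → Wt p = C p := by
    intro p hp
    have hmp : m p = (μ ^ 2)⁻¹ • P.mulVec (κ p) := by rw [hm]
    have h1 := hlin p hp
    have h2 := hcompat p hp
    have h3 : ps v p = -cross3 (κ p) (v p) - cross3 (τ0 p.1) (ω p) := by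
      have h := hconstr p hp
      funext i
      have h' := congrFun h i
      simp only [Pi.zero_apply, Pi.add_apply] at h'
      simp only [Pi.sub_apply, Pi.neg_apply]
      linarith
    have h4 : ps m p = -cross3 (κ p) (m p) - cross3 (τ0 p.1) (n p) := by
      have h := hang p hp
      rw [← hmp] at h
      funext i
      have h' := congrFun h i
      simp only [Pi.zero_apply, Pi.add_apply] at h'
      simp only [Pi.sub_apply, Pi.neg_apply]
      linarith
    have halg := K_alg μ a (fderiv ℝ V (r p) (pt r p)) (κ p) (v p) (ω p) (n p) (τ0 p.1)
      (ps n p) (ps ω p) ((D p).mulVec (-(grad3 V (r p)))) (hDterm p hp)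
    simp only [hWt, hC]
    rw [h1, h2, h3, h4, hmp, hP]
    linear_combination halg
  -- the flux integrates to zero thanks to the boundary conditions
  have hCint0 : ∀ t : ℝ, (∫ s in (0:ℝ)..1, C (s, t)) = 0 := by
    intro t
    have hi : IntervalIntegrable (fun s => C (s, t)) volume 0 1 :=
      (hCc.comp (continuous_id.prodMk continuous_const)).intervalIntegrable 0 1
    have h := intervalIntegral.integral_eq_sub_of_hasDerivAt
      (f := fun s => G (s, t)) (f' := fun s => C (s, t)) (a := (0:ℝ)) (b := 1)
      (fun x _ => hGd (x, t)) hi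
    rw [h]
    obtain ⟨hbv, hbω, hbn, hbκ⟩ := hbc t
    have hm1 : m (1, t) = 0 := by simp [hm, hbκ]
    simp [hG, hbv, hbω, hbn, hm1]
  -- the main monotone case
  have main : ∀ u₁ u₂ : ℝ, u₁ ≤ u₂ →
      (∫ s in (0:ℝ)..1, W (s, u₁)) = ∫ s in (0:ℝ)..1, W (s, u₂) := by
    intro u₁ u₂ hu
    have hWint : ∀ u : ℝ, IntervalIntegrable (fun s => W (s, u)) volume 0 1 := fun u =>
      (hWc.comp (continuous_id.prodMk continuous_const)).intervalIntegrable 0 1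
    have hsub : ∀ s : ℝ, (∫ t in u₁..u₂, Wt (s, t)) = W (s, u₂) - W (s, u₁) := fun s =>
      intervalIntegral.integral_eq_sub_of_hasDerivAt (f := fun t => W (s, t))
        (f' := fun t => Wt (s, t)) (fun x _ => hWd (s, x))
        ((hWtc.comp (continuous_const.prodMk continuous_id)).intervalIntegrable u₁ u₂)
    have hstep1 : (∫ s in (0:ℝ)..1, W (s, u₂)) - ∫ s in (0:ℝ)..1, W (s, u₁)
        = ∫ s in (0:ℝ)..1, (W (s, u₂) - W (s, u₁)) :=
      (intervalIntegral.integral_sub (hWint u₂) (hWint u₁)).symm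
    have hstep2 : (∫ s in (0:ℝ)..1, (W (s, u₂) - W (s, u₁)))
        = ∫ s in (0:ℝ)..1, ∫ t in u₁..u₂, C (s, t) := by
      apply intervalIntegral.integral_congr
      intro s hs
      rw [Set.uIcc_of_le (by norm_num : (0:ℝ) ≤ 1)] at hs
      have hCW : (∫ t in u₁..u₂, C (s, t)) = ∫ t in u₁..u₂, Wt (s, t) :=
        intervalIntegral.integral_congr (fun t _ => (key (s, t) hs).symm)
      show W (s, u₂) - W (s, u₁) = ∫ t in u₁..u₂, C (s, t)
      rw [hCW, hsub s]
    have hswap : (∫ s in (0:ℝ)..1, ∫ t in u₁..u₂, C (s, t))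
        = ∫ t in u₁..u₂, ∫ s in (0:ℝ)..1, C (s, t) := by
      simp only [intervalIntegral.integral_of_le hu,
        intervalIntegral.integral_of_le (zero_le_one (α := ℝ))]
      have hint : Integrable (Function.uncurry fun s t => C (s, t))
          ((volume.restrict (Set.Ioc (0:ℝ) 1)).prod (volume.restrict (Set.Ioc u₁ u₂))) := by
        rw [Measure.prod_restrict]
        have h1 : IntegrableOn C ((Set.Icc (0:ℝ) 1) ×ˢ (Set.Icc u₁ u₂)) (volume.prod volume) :=
          hCc.continuousOn.integrableOn_compact (isCompact_Icc.prod isCompact_Icc)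
        have h2 : IntegrableOn C ((Set.Ioc (0:ℝ) 1) ×ˢ (Set.Ioc u₁ u₂)) (volume.prod volume) :=
          h1.mono_set (Set.prod_mono Set.Ioc_subset_Icc_self Set.Ioc_subset_Icc_self)
        exact h2
      exact integral_integral_swap hint
    have hlast : (∫ t in u₁..u₂, ∫ s in (0:ℝ)..1, C (s, t)) = 0 := by
      simp [hCint0]
    linarith [hstep1, hstep2, hswap, hlast]
  rcases le_total t₁ t₂ with h | h
  · simpa only [hW] using main t₁ t₂ h
  · simpa only [hW] using (main t₂ t₁ h).symm
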